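/- Let α be an ergodic automorphism of a compact nilmanifold X = G/Λ with central fibration: Z the center of G, ZΛ closed in G, and the action of α on the torus T = ZΛ/Λ ergodic. If the factor system α on Y = G/(ZΛ) is Bernoulli and α on T is Bernoulli, then α on X, being measurably isomorphic to the direct product of these two systems, is Bernoulli. -/

import Mathlib

open MeasureTheory

/-- A measure-preserving system `(X, μ, T)` is *Bernoulli* if it is measurably
isomorphic (mod 0) to a Bernoulli shift: there is a probability space `(A, ν)` and a
measurable, a.e. invertible, equivariant map `e : X → A^ℤ` whose pushforward has i.i.d.
coordinates of law `ν`. -/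
def IsBernoulli {X : Type*} [MeasurableSpace X] (μ : Measure X) (T : X → X) : Prop :=
  ∃ (A : Type) (_ : MeasurableSpace A) (ν : Measure A), IsProbabilityMeasure ν ∧
    ∃ e : X → ℤ → A, Measurable e ∧
      (∀ᵐ x ∂μ, e (T x) = fun n => e x (n + 1)) ∧
      (∀ s : Finset ℤ,
        Measure.map (fun x (i : s) => e x (i : ℤ)) μ = Measure.pi fun _ : s => ν) ∧
      ∃ g : (ℤ → A) → X, Measurable g ∧ ∀ᵐ x ∂μ, g (e x) = x

/-- If the system `(X, μ, α_X)` (an ergodic nilmanifold automorphism over the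
central torus fibration) is measurably isomorphic to the direct product of the factor
system on `Y = G/(ZΛ)` and the toral system on `T = ZΛ/Λ`, and both factors are
Bernoulli, then `(X, μ, α_X)` is Bernoulli. -/
theorem bernoulli_of_isomorphic_to_product_of_bernoulli
    {X Y T : Type*} [MeasurableSpace X] [MeasurableSpace Y] [MeasurableSpace T]
    (μ : Measure X) (μY : Measure Y) (μT : Measure T)
    [IsProbabilityMeasure μ] [IsProbabilityMeasure μY] [IsProbabilityMeasure μT]
    (αX : X → X) (αY : Y → Y) (αT : T → T)
    (hX : MeasurePreserving αX μ μ) (hY : MeasurePreserving αY μY μY)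
    (hTmp : MeasurePreserving αT μT μT)
    (hergX : Ergodic αX μ) (hergT : Ergodic αT μT)
    -- the measurable isomorphism (mod 0) with the direct product system:
    (e : X → Y × T) (he : Measurable e) (hepres : MeasurePreserving e μ (μY.prod μT))
    (hequiv : ∀ᵐ x ∂μ, e (αX x) = (αY (e x).1, αT (e x).2))
    (einv : Y × T → X) (heinv : Measurable einv) (heinj : ∀ᵐ x ∂μ, einv (e x) = x)
    (hBerY : IsBernoulli μY αY) (hBerT : IsBernoulli μT αT) :
    IsBernoulli μ αX := by
  obtain ⟨A, mA, νA, hνA, eY, heY, heqY, hpiY, gY, hgY, hginvY⟩ := hBerY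
  obtain ⟨B, mB, νB, hνB, eT, heT, heqT, hpiT, gT, hgT, hginvT⟩ := hBerT
  -- quasi measure preserving projections
  have qfst : Measure.QuasiMeasurePreserving (fun x => (e x).1) μ μY :=
    Measure.quasiMeasurePreserving_fst.comp hepres.quasiMeasurePreserving
  have qsnd : Measure.QuasiMeasurePreserving (fun x => (e x).2) μ μT :=
    Measure.quasiMeasurePreserving_snd.comp hepres.quasiMeasurePreserving
  refine ⟨A × B, inferInstance, νA.prod νB, inferInstance,
    fun x n => (eY (e x).1 n, eT (e x).2 n), ?_, ?_, ?_, ?_⟩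
  · exact measurable_pi_lambda _ fun n =>
      ((heY.comp (measurable_fst.comp he)).eval.prodMk
        ((heT.comp (measurable_snd.comp he)).eval))
  · filter_upwards [hequiv, qfst.ae heqY, qsnd.ae heqT] with x hx h1 h2
    funext n
    simp only [hx, h1, h2]
  · intro s
    have key := (measurePreserving_arrowProdEquivProdArrow A B s
      (fun _ => νA) (fun _ => νB)).symm
    have h1 : Measure.map (fun y (i : s) => eY y (i : ℤ)) μY = Measure.pi fun _ : s => νA :=
      hpiY s
    have h2 : Measure.map (fun t (i : s) => eT t (i : ℤ)) μT = Measure.pi fun _ : s => νB :=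
      hpiT s
    have hFY : Measurable (fun y (i : s) => eY y (i : ℤ)) :=
      measurable_pi_lambda _ fun i => heY.eval
    have hFT : Measurable (fun t (i : s) => eT t (i : ℤ)) :=
      measurable_pi_lambda _ fun i => heT.eval
    have hmapprod : Measure.map
        (Prod.map (fun y (i : s) => eY y (i : ℤ)) (fun t (i : s) => eT t (i : ℤ)))
        (μY.prod μT)
        = (Measure.pi fun _ : s => νA).prod (Measure.pi fun _ : s => νB) := by
      rw [← Measure.map_prod_map _ _ hFY hFT, h1, h2]
    have hcomp : (fun x (i : s) => ((fun x n => (eY (e x).1 n, eT (e x).2 n)) x (i : ℤ)))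
        = (MeasurableEquiv.arrowProdEquivProdArrow A B s).symm ∘
          (Prod.map (fun y (i : s) => eY y (i : ℤ)) (fun t (i : s) => eT t (i : ℤ))) ∘ e := by
      funext x
      rfl
    rw [hcomp, ← Function.comp_assoc,
      ← Measure.map_map (((MeasurableEquiv.arrowProdEquivProdArrow A B s).symm.measurable).comp
        ((hFY.prodMap hFT))) he,
      ← Measure.map_map (MeasurableEquiv.arrowProdEquivProdArrow A B s).symm.measurable
        (hFY.prodMap hFT),
      hepres.map_eq, hmapprod, key.map_eq]
  · refine ⟨fun w => einv (gY (fun n => (w n).1), gT (fun n => (w n).2)), ?_, ?_⟩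
    · exact heinv.comp
        ((hgY.comp (measurable_pi_lambda _ fun n => measurable_fst.comp (measurable_pi_apply n))).prodMk
          (hgT.comp (measurable_pi_lambda _ fun n => measurable_snd.comp (measurable_pi_apply n))))
    · filter_upwards [qfst.ae hginvY, qsnd.ae hginvT, heinj] with x h1 h2 h3
      simp only [h1, h2, h3]
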